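/- Let n ≥ 3 and let θ_1, …, θ_n ∈ [0, π) be pairwise distinct with θ_1 = min{θ_1, …, θ_n}, and suppose there exists j with 1 ≤ j ≤ n−1 such that θ_1 < θ_2 < ⋯ < θ_j, θ_{j+1} < θ_{j+2} < ⋯ < θ_n, and θ_{j+1} < θ_j. Then there exist points V_1, …, V_n ∈ ℝ² in strictly convex, positively oriented position (with indices modulo n, det(V_i − V_{i−1}, V_k − V_i) > 0 for every i and every k ∉ {i−1, i}) such that for each i the edge vector V_i − V_{i−1} is parallel to (cos θ_i, sin θ_i). (Any prescribed 2-standard consecutive slope pattern respecting the slope property is realized by an anticlockwise n-gonality L_1 → L_2 → ⋯ → L_n → L_1 of lines with the given directions.) -/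
import Mathlib


open Real

private lemma cos_lt_cos_aux {h x : ℝ} (hh : 0 < h) (hhp : h < π)
    (hx1 : h < x) (hx2 : x < 2*π - h) : Real.cos x < Real.cos h := by
  rcases le_or_gt x π with hxle | hxgt
  · exact Real.cos_lt_cos_of_nonneg_of_le_pi hh.le hxle hx1
  · have hc : Real.cos x = Real.cos (2*π - x) := (Real.cos_two_pi_sub x).symm
    rw [hc]
    exact Real.cos_lt_cos_of_nonneg_of_le_pi hh.le (by linarith) (by linarith)

private lemma decomp_aux (w : ℝ × ℝ) (b : ℝ)
    (h : w.1 * Real.sin b - w.2 * Real.cos b = 0) :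
    w = (w.1 * Real.cos b + w.2 * Real.sin b) • (Real.cos b, Real.sin b) := by
  have pyth := Real.sin_sq_add_cos_sq b
  have e1 : ((w.1 * Real.cos b + w.2 * Real.sin b) • (Real.cos b, Real.sin b) : ℝ × ℝ).1
      = (w.1 * Real.cos b + w.2 * Real.sin b) * Real.cos b := rfl
  have e2 : ((w.1 * Real.cos b + w.2 * Real.sin b) • (Real.cos b, Real.sin b) : ℝ × ℝ).2
      = (w.1 * Real.cos b + w.2 * Real.sin b) * Real.sin b := rfl
  apply Prod.ext
  · rw [e1]; linear_combination Real.sin b * h - w.1 * pyth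
  · rw [e2]; linear_combination (-Real.cos b) * h - w.2 * pyth

private lemma gonality_aux (n : ℕ) [NeZero n] (Φ Φ' : Fin n → ℝ)
    (hgap1 : ∀ i, Φ i < Φ' i) (hgap2 : ∀ i, Φ' i < Φ i + π)
    (hlink : ∀ i, Φ' i = Φ (i+1) ∨ Φ' i = Φ (i+1) + 2*π)
    (hsep : ∀ i k : Fin n, k ≠ i → k ≠ i - 1 →
      (Φ i < Φ k ∧ Φ' k < Φ i + 2*π) ∨ (Φ' k < Φ i ∧ Φ i - 2*π < Φ k)) :
    ∃ V : Fin n → ℝ × ℝ,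
      (∀ i k : Fin n, k ≠ i - 1 → k ≠ i →
        0 < (V i - V (i - 1)).1 * (V k - V i).2 - (V i - V (i - 1)).2 * (V k - V i).1) ∧
      (∀ i : Fin n, ∃ r : ℝ, 0 < r ∧
        V i - V (i - 1) = r • (Real.cos (Φ i), Real.sin (Φ i))) := by
  have hπ := Real.pi_pos
  set d : Fin n → ℝ := fun k => 1 + Real.cos (Φ' k - Φ k) with hd_def
  have hd : ∀ k, 0 < d k := by
    intro k
    have h1 : Real.cos π < Real.cos (Φ' k - Φ k) := by
      apply Real.cos_lt_cos_of_nonneg_of_le_pi (by linarith [hgap1 k]) le_rfl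
      linarith [hgap2 k]
    rw [Real.cos_pi] at h1
    simp only [hd_def]; linarith
  set V : Fin n → ℝ × ℝ := fun k =>
    ((Real.sin (Φ k) + Real.sin (Φ' k)) / d k,
     -(Real.cos (Φ k) + Real.cos (Φ' k)) / d k) with hV_def
  have innerN : ∀ k t, (V k).1 * Real.sin t - (V k).2 * Real.cos t
      = (Real.cos (Φ k - t) + Real.cos (Φ' k - t)) / d k := by
    intro k t
    simp only [hV_def]
    rw [Real.cos_sub, Real.cos_sub]
    field_simp
    ring
  have innerU : ∀ k t, (V k).1 * Real.cos t + (V k).2 * Real.sin t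
      = (Real.sin (Φ k - t) + Real.sin (Φ' k - t)) / d k := by
    intro k t
    simp only [hV_def]
    rw [Real.sin_sub, Real.sin_sub]
    field_simp
    ring
  have hpred : ∀ i : Fin n,
      Real.cos (Φ' (i-1) - Φ i) = 1 ∧
      Real.cos (Φ (i-1) - Φ i) = Real.cos (Φ' (i-1) - Φ (i-1)) ∧
      Real.sin (Φ' (i-1) - Φ i) = 0 ∧
      Real.sin (Φ (i-1) - Φ i) = -Real.sin (Φ' (i-1) - Φ (i-1)) := by
    intro i
    have hc : (i - 1) + 1 = i := sub_add_cancel i 1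
    rcases hlink (i-1) with he | he <;> rw [hc] at he
    · rw [he]
      refine ⟨by simp, ?_, by simp, ?_⟩
      · rw [show Φ (i-1) - Φ i = -(Φ i - Φ (i-1)) by ring, Real.cos_neg]
      · rw [show Φ (i-1) - Φ i = -(Φ i - Φ (i-1)) by ring, Real.sin_neg]
    · rw [he]
      refine ⟨?_, ?_, ?_, ?_⟩
      · rw [show Φ i + 2*π - Φ i = 2*π by ring, Real.cos_two_pi]
      · rw [show Φ i + 2*π - Φ (i-1) = (Φ i - Φ (i-1)) + 2*π by ring,
          Real.cos_add_two_pi, show Φ (i-1) - Φ i = -(Φ i - Φ (i-1)) by ring, Real.cos_neg]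
      · rw [show Φ i + 2*π - Φ i = 2*π by ring, Real.sin_two_pi]
      · rw [show Φ i + 2*π - Φ (i-1) = (Φ i - Φ (i-1)) + 2*π by ring,
          Real.sin_add_two_pi, show Φ (i-1) - Φ i = -(Φ i - Φ (i-1)) by ring, Real.sin_neg]
  -- normal component of each vertex on its own two lines
  have hN_self : ∀ i : Fin n, (V i).1 * Real.sin (Φ i) - (V i).2 * Real.cos (Φ i) = 1 := by
    intro i
    rw [innerN i (Φ i), sub_self, Real.cos_zero]
    show d i / d i = 1
    exact div_self (hd i).ne'
  have hN_pred : ∀ i : Fin n,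
      (V (i-1)).1 * Real.sin (Φ i) - (V (i-1)).2 * Real.cos (Φ i) = 1 := by
    intro i
    obtain ⟨hp1, hp2, _, _⟩ := hpred i
    rw [innerN (i-1) (Φ i), hp1, hp2,
      add_comm (Real.cos (Φ' (i-1) - Φ (i-1))) 1]
    show d (i-1) / d (i-1) = 1
    exact div_self (hd (i-1)).ne'
  -- the edge vector
  have hedge : ∀ i : Fin n, ∃ r : ℝ, 0 < r ∧
      V i - V (i-1) = r • (Real.cos (Φ i), Real.sin (Φ i)) := by
    intro i
    obtain ⟨_, _, hp3, hp4⟩ := hpred i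
    set w := V i - V (i-1) with hw
    have hw1 : w.1 = (V i).1 - (V (i-1)).1 := rfl
    have hw2 : w.2 = (V i).2 - (V (i-1)).2 := rfl
    have hn0 : w.1 * Real.sin (Φ i) - w.2 * Real.cos (Φ i) = 0 := by
      rw [hw1, hw2]
      have := hN_self i
      have := hN_pred i
      linarith [hN_self i, hN_pred i]
    have hu : w.1 * Real.cos (Φ i) + w.2 * Real.sin (Φ i)
        = Real.sin (Φ' i - Φ i) / d i + Real.sin (Φ' (i-1) - Φ (i-1)) / d (i-1) := by
      rw [hw1, hw2]
      have b1 := innerU i (Φ i)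
      have b2 := innerU (i-1) (Φ i)
      rw [sub_self, Real.sin_zero] at b1
      rw [hp3, hp4] at b2
      rw [show ((V i).1 - (V (i-1)).1) * Real.cos (Φ i) + ((V i).2 - (V (i-1)).2) * Real.sin (Φ i)
        = ((V i).1 * Real.cos (Φ i) + (V i).2 * Real.sin (Φ i))
          - ((V (i-1)).1 * Real.cos (Φ i) + (V (i-1)).2 * Real.sin (Φ i)) by ring, b1, b2]
      ring
    have hrpos : 0 < Real.sin (Φ' i - Φ i) / d i + Real.sin (Φ' (i-1) - Φ (i-1)) / d (i-1) := by
      have s1 : 0 < Real.sin (Φ' i - Φ i) :=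
        Real.sin_pos_of_pos_of_lt_pi (by linarith [hgap1 i]) (by linarith [hgap2 i])
      have s2 : 0 < Real.sin (Φ' (i-1) - Φ (i-1)) :=
        Real.sin_pos_of_pos_of_lt_pi (by linarith [hgap1 (i-1)]) (by linarith [hgap2 (i-1)])
      exact add_pos (div_pos s1 (hd i)) (div_pos s2 (hd (i-1)))
    refine ⟨_, hrpos, ?_⟩
    have := decomp_aux w (Φ i) hn0
    rw [hu] at this
    exact this
  refine ⟨V, ?_, hedge⟩
  intro i k hk1 hk2
  obtain ⟨r, hr, he⟩ := hedge i
  rw [he]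
  have c1 : ((r • (Real.cos (Φ i), Real.sin (Φ i)) : ℝ × ℝ)).1 = r * Real.cos (Φ i) := rfl
  have c2 : ((r • (Real.cos (Φ i), Real.sin (Φ i)) : ℝ × ℝ)).2 = r * Real.sin (Φ i) := rfl
  rw [c1, c2]
  have hs1 : (V k - V i).1 = (V k).1 - (V i).1 := rfl
  have hs2 : (V k - V i).2 = (V k).2 - (V i).2 := rfl
  rw [hs1, hs2]
  have expand : r * Real.cos (Φ i) * ((V k).2 - (V i).2)
      - r * Real.sin (Φ i) * ((V k).1 - (V i).1)
      = r * (((V i).1 * Real.sin (Φ i) - (V i).2 * Real.cos (Φ i))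
        - ((V k).1 * Real.sin (Φ i) - (V k).2 * Real.cos (Φ i))) := by ring
  rw [expand, hN_self i, innerN k (Φ i)]
  -- key inequality
  have key : (Real.cos (Φ k - Φ i) + Real.cos (Φ' k - Φ i)) / d k < 1 := by
    rw [div_lt_one (hd k)]
    set p := Φ k - Φ i with hp
    set q := Φ' k - Φ i with hq
    set g := Φ' k - Φ k with hg
    have hg1 : 0 < g := by simp only [hg]; linarith [hgap1 k]
    have hg2 : g < π := by simp only [hg]; linarith [hgap2 k]
    have hpq : (p - q)/2 = -(g/2) := by rw [hp, hq, hg]; ring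
    have hsum : Real.cos p + Real.cos q = 2 * Real.cos ((p+q)/2) * Real.cos (g/2) := by
      rw [Real.cos_add_cos, hpq, Real.cos_neg]
    have hdk : d k = 2 * Real.cos (g/2)^2 := by
      have : Real.cos (g/2)^2 = (1 + Real.cos g)/2 := by
        rw [Real.cos_sq, show 2*(g/2) = g by ring]; ring
      simp only [hd_def, ← hg]
      linarith [this]
    have hcoshpos : 0 < Real.cos (g/2) :=
      Real.cos_pos_of_mem_Ioo ⟨by linarith, by linarith⟩
    have hcos : Real.cos ((p+q)/2) < Real.cos (g/2) := by
      rcases hsep i k hk2 hk1 with ⟨s1, s2⟩ | ⟨s1, s2⟩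
      · apply cos_lt_cos_aux (by linarith) (by linarith)
        · simp only [hp, hq, hg]; linarith
        · simp only [hp, hq, hg]; linarith
      · rw [show (p+q)/2 = -(-((p+q)/2)) by ring, Real.cos_neg]
        apply cos_lt_cos_aux (by linarith) (by linarith)
        · simp only [hp, hq, hg]; linarith
        · simp only [hp, hq, hg]; linarith
    rw [hsum, hdk]
    nlinarith [hcoshpos, hcos]
  nlinarith [hr, key]

/-- Any prescribed `2`-standard consecutive slope pattern respecting the slope property
is realized by an anticlockwise `n`-gonality: given pairwise distinct angles
`θ i ∈ [0, π)` with `θ 0` minimal, split into two increasing runs (0-based indices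
`0, …, j-1` and `j, …, n-1`) with `θ j < θ (j-1)`, there are points `V 0, …, V (n-1)`
in strictly convex, positively oriented position whose edge `V i - V (i-1)` is
parallel to `(cos (θ i), sin (θ i))` for each `i`. -/
theorem gonality_of_two_standard_consecutive_structure
    (n : ℕ) [NeZero n] (hn : 3 ≤ n) (θ : Fin n → ℝ)
    (hθrange : ∀ i : Fin n, θ i ∈ Set.Ico 0 Real.pi)
    (hinj : Function.Injective θ)
    (hmin : ∀ i : Fin n, θ 0 ≤ θ i)
    (j : ℕ) (h1 : 1 ≤ j) (h2 : j < n)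
    (hrun1 : ∀ s t : Fin n, (s : ℕ) < (t : ℕ) → (t : ℕ) < j → θ s < θ t)
    (hrun2 : ∀ s t : Fin n, j ≤ (s : ℕ) → (s : ℕ) < (t : ℕ) → θ s < θ t)
    (hjump : θ ⟨j, h2⟩ < θ ⟨j - 1, lt_of_le_of_lt (Nat.sub_le j 1) h2⟩) :
    ∃ V : Fin n → ℝ × ℝ,
      (∀ i k : Fin n, k ≠ i - 1 → k ≠ i →
        0 < (V i - V (i - 1)).1 * (V k - V i).2 - (V i - V (i - 1)).2 * (V k - V i).1) ∧
      (∀ i : Fin n, ∃ r : ℝ, r ≠ 0 ∧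
        V i - V (i - 1) = r • (Real.cos (θ i), Real.sin (θ i))) := by
  have hπ := Real.pi_pos
  -- Fin arithmetic helpers
  have hzero : ((0 : Fin n) : ℕ) = 0 := by simp
  have hone : ((1 : Fin n) : ℕ) = 1 := by
    rw [Fin.val_one']; exact Nat.mod_eq_of_lt (by omega)
  have hadd : ∀ i : Fin n, ((i + 1 : Fin n) : ℕ) = ((i : ℕ) + 1) % n := by
    intro i; rw [Fin.add_def, hone]
  have haddlt : ∀ i : Fin n, (i : ℕ) < n - 1 → ((i + 1 : Fin n) : ℕ) = (i : ℕ) + 1 := by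
    intro i hi; rw [hadd]; exact Nat.mod_eq_of_lt (by omega)
  have haddlast : ∀ i : Fin n, (i : ℕ) = n - 1 → (i + 1 : Fin n) = 0 := by
    intro i hi
    apply Fin.ext
    rw [hadd, hzero, hi, Nat.sub_add_cancel (by omega), Nat.mod_self]
  -- θ facts
  have hstrict : ∀ i : Fin n, (i : ℕ) ≠ 0 → θ 0 < θ i := by
    intro i hi
    refine lt_of_le_of_ne (hmin i) (fun he => hi ?_)
    have h0 : (0 : Fin n) = i := hinj he
    rw [← h0, hzero]
  -- the lifted angles
  set Φ : Fin n → ℝ := fun i => if (i : ℕ) < j then θ i else θ i + Real.pi with hΦ_def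
  set Φ' : Fin n → ℝ := fun i =>
    if (i : ℕ) = n - 1 then θ 0 + 2 * Real.pi else Φ (i + 1) with hΦ'_def
  have hlb : ∀ i : Fin n, θ i ≤ Φ i := by
    intro i; simp only [hΦ_def]
    split <;> linarith
  have hub : ∀ i : Fin n, Φ i < 2 * Real.pi := by
    intro i; simp only [hΦ_def]
    have := (hθrange i).2
    split <;> linarith
  have hΦ0 : Φ 0 = θ 0 := by
    simp only [hΦ_def]; rw [if_pos]; rw [hzero]; omega
  have hmonoΦ : ∀ s t : Fin n, (s : ℕ) < (t : ℕ) → Φ s < Φ t := by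
    intro s t hst
    simp only [hΦ_def]
    rcases lt_or_ge (t : ℕ) j with h | h
    · rw [if_pos (lt_trans hst h), if_pos h]; exact hrun1 s t hst h
    · rw [if_neg (not_lt.2 h)]
      rcases lt_or_ge (s : ℕ) j with hs | hs
      · rw [if_pos hs]
        have := (hθrange s).2; have := (hθrange t).1; linarith
      · rw [if_neg (not_lt.2 hs)]
        have := hrun2 s t hs hst; linarith
  -- gaps
  have hgap : ∀ i : Fin n, Φ i < Φ' i ∧ Φ' i < Φ i + Real.pi := by
    intro i
    rcases eq_or_ne (i : ℕ) (n - 1) with hi | hi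
    · have e : Φ' i = θ 0 + 2 * Real.pi := by simp only [hΦ'_def]; rw [if_pos hi]
      have eΦ : Φ i = θ i + Real.pi := by
        simp only [hΦ_def]; rw [if_neg]; omega
      have hi0 : (i : ℕ) ≠ 0 := by omega
      have := hstrict i hi0
      have := (hθrange i).2
      have := (hθrange 0).1
      rw [e, eΦ]
      constructor <;> linarith
    · have e : Φ' i = Φ (i + 1) := by simp only [hΦ'_def]; rw [if_neg hi]
      have hilt : (i : ℕ) < n - 1 := by have := i.isLt; omega
      have hv : ((i + 1 : Fin n) : ℕ) = (i : ℕ) + 1 := haddlt i hilt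
      rw [e]
      rcases lt_trichotomy ((i : ℕ) + 1) j with hc | hc | hc
      · have e1 : Φ i = θ i := by simp only [hΦ_def]; rw [if_pos]; omega
        have e2 : Φ (i + 1) = θ (i + 1) := by
          simp only [hΦ_def]; rw [if_pos]; rw [hv]; exact hc
        have hmono := hrun1 i (i + 1) (by omega) (by rw [hv]; exact hc)
        have := (hθrange i).1; have := (hθrange (i + 1)).2
        rw [e1, e2]
        constructor <;> linarith
      · have e1 : Φ i = θ i := by simp only [hΦ_def]; rw [if_pos]; omega
        have e2 : Φ (i + 1) = θ (i + 1) + Real.pi := by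
          simp only [hΦ_def]; rw [if_neg]; rw [hv]; omega
        have k1 : (i + 1 : Fin n) = ⟨j, h2⟩ :=
          Fin.ext (show ((i + 1 : Fin n) : ℕ) = j by rw [hv]; omega)
        have k2 : i = ⟨j - 1, lt_of_le_of_lt (Nat.sub_le j 1) h2⟩ :=
          Fin.ext (show (i : ℕ) = j - 1 by omega)
        have hjump' : θ (i + 1) < θ i := by rw [k1, k2]; exact hjump
        have := (hθrange i).2; have := (hθrange (i + 1)).1
        rw [e1, e2]
        constructor <;> linarith
      · have e1 : Φ i = θ i + Real.pi := by simp only [hΦ_def]; rw [if_neg]; omega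
        have e2 : Φ (i + 1) = θ (i + 1) + Real.pi := by
          simp only [hΦ_def]; rw [if_neg]; rw [hv]; omega
        have hmono := hrun2 i (i + 1) (by omega) (by rw [hv]; omega)
        have := (hθrange i).1; have := (hθrange (i + 1)).2
        rw [e1, e2]
        constructor <;> linarith
  have hlink : ∀ i : Fin n, Φ' i = Φ (i + 1) ∨ Φ' i = Φ (i + 1) + 2 * Real.pi := by
    intro i
    rcases eq_or_ne (i : ℕ) (n - 1) with hi | hi
    · right
      have e : Φ' i = θ 0 + 2 * Real.pi := by simp only [hΦ'_def]; rw [if_pos hi]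
      rw [e, haddlast i hi, hΦ0]
    · left
      simp only [hΦ'_def]; rw [if_neg hi]
  have hsep : ∀ i k : Fin n, k ≠ i → k ≠ i - 1 →
      (Φ i < Φ k ∧ Φ' k < Φ i + 2 * Real.pi) ∨
      (Φ' k < Φ i ∧ Φ i - 2 * Real.pi < Φ k) := by
    intro i k hki hki1
    have hk1 : k + 1 ≠ i := fun h' => hki1 (eq_sub_of_add_eq h')
    rcases lt_trichotomy (k : ℕ) (i : ℕ) with h | h | h
    · right
      constructor
      · have hkn : (k : ℕ) ≠ n - 1 := by have := i.isLt; omega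
        have e : Φ' k = Φ (k + 1) := by simp only [hΦ'_def]; rw [if_neg hkn]
        have hv : ((k + 1 : Fin n) : ℕ) = (k : ℕ) + 1 :=
          haddlt k (by have := i.isLt; omega)
        have hne : (k : ℕ) + 1 ≠ (i : ℕ) := fun heq =>
          hk1 (Fin.ext (by rw [hv, heq]))
        rw [e]
        exact hmonoΦ (k + 1) i (by rw [hv]; omega)
      · have := hub i; have := hlb k; have := (hθrange k).1; linarith
    · exact absurd (Fin.ext h) hki
    · left
      refine ⟨hmonoΦ i k h, ?_⟩
      rcases eq_or_ne (k : ℕ) (n - 1) with hk | hk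
      · have e : Φ' k = θ 0 + 2 * Real.pi := by simp only [hΦ'_def]; rw [if_pos hk]
        rw [e]
        rcases Nat.eq_zero_or_pos (i : ℕ) with hi0 | hip
        · exfalso
          apply hk1
          exact Fin.ext (by rw [hadd, hk, Nat.sub_add_cancel (by omega), Nat.mod_self, hi0])
        · have h01 := hstrict i (by omega)
          have := hlb i
          linarith
      · have e : Φ' k = Φ (k + 1) := by simp only [hΦ'_def]; rw [if_neg hk]
        rw [e]
        have := hub (k + 1); have := hlb i; have := (hθrange i).1; have := hmin i
        linarith
  obtain ⟨V, hdet, hedges⟩ := gonality_aux n Φ Φ'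
    (fun i => (hgap i).1) (fun i => (hgap i).2) hlink hsep
  refine ⟨V, hdet, ?_⟩
  intro i
  obtain ⟨r, hr, he⟩ := hedges i
  rcases lt_or_ge (i : ℕ) j with hij | hij
  · have eΦ : Φ i = θ i := by simp only [hΦ_def]; rw [if_pos hij]
    exact ⟨r, hr.ne', by rw [he, eΦ]⟩
  · have eΦ : Φ i = θ i + Real.pi := by simp only [hΦ_def]; rw [if_neg (not_lt.2 hij)]
    refine ⟨-r, by simp [hr.ne'], ?_⟩
    rw [he, eΦ, Real.cos_add_pi, Real.sin_add_pi]
    apply Prod.ext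
    · show r * -Real.cos (θ i) = -r * Real.cos (θ i); ring
    · show r * -Real.sin (θ i) = -r * Real.sin (θ i); ring
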